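/- arXiv:2504.18098 — 2 statements merged into one kernel-verified Lean document; each statement's English description precedes it below -/
import Mathlib

section
/- For every n-qubit state ρ and every real α ≥ 1/2 with α ≠ 1, the magic witness is bounded by twice the logarithm of the stabilizer norm: W_α(ρ) ≤ 2 ln D(ρ). -/
open Matrix Complex BigOperators
open scoped ComplexOrder

noncomputable section

/-- Index type for `n` qubits: functions `Fin n → Fin 2` (cardinality `2^n`). -/
abbrev QIdx (n : ℕ) := Fin n → Fin 2

/-- The four single-qubit Pauli matrices: `σ⁰ = I`, `σ¹ = σˣ`, `σ² = σᶻ`, `σ³ = σʸ`. -/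
def pauliMat : Fin 4 → Matrix (Fin 2) (Fin 2) ℂ
  | 0 => 1
  | 1 => !![0, 1; 1, 0]
  | 2 => !![1, 0; 0, -1]
  | 3 => !![0, -Complex.I; Complex.I, 0]

/-- The Pauli string `σ^{a_1} ⊗ ⋯ ⊗ σ^{a_n}` as a `2^n × 2^n` matrix. -/
def pauliString {n : ℕ} (a : Fin n → Fin 4) : Matrix (QIdx n) (QIdx n) ℂ :=
  fun i j => ∏ k, pauliMat (a k) (i k) (j k)

/-- An `n`-qubit state: positive semidefinite with unit trace. -/
def IsState {n : ℕ} (ρ : Matrix (QIdx n) (QIdx n) ℂ) : Prop :=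
  ρ.PosSemidef ∧ ρ.trace = 1

/-- The `α`-moment of the Pauli spectrum `A_α(ρ) = 2^{-n} ∑_P |tr(ρP)|^{2α}`. -/
def Amom {n : ℕ} (α : ℝ) (ρ : Matrix (QIdx n) (QIdx n) ℂ) : ℝ :=
  ((2:ℝ)^n)⁻¹ * ∑ a : Fin n → Fin 4, (‖(ρ * pauliString a).trace‖) ^ (2 * α)

/-- The 2-Rényi entropy `S₂(ρ) = -ln tr(ρ²)`. -/
def S2 {n : ℕ} (ρ : Matrix (QIdx n) (QIdx n) ℂ) : ℝ :=
  - Real.log ((ρ * ρ).trace.re)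

/-- The magic witness `W_α(ρ) = (1/(1-α)) ln A_α(ρ) - ((1-2α)/(1-α)) S₂(ρ)`. -/
def Wit {n : ℕ} (α : ℝ) (ρ : Matrix (QIdx n) (QIdx n) ℂ) : ℝ :=
  (1 / (1 - α)) * Real.log (Amom α ρ) - ((1 - 2*α)/(1 - α)) * S2 ρ

/-- The stabilizer norm `D(ρ) = A_{1/2}(ρ) = 2^{-n} ∑_P |tr(ρP)|`. -/
def Dnorm {n : ℕ} (ρ : Matrix (QIdx n) (QIdx n) ℂ) : ℝ :=
  Amom (1/2) ρ

/-- A Clifford unitary: unitary mapping every Pauli string to `±` a Pauli string. -/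
def IsCliffordUnitary {n : ℕ} (U : Matrix (QIdx n) (QIdx n) ℂ) : Prop :=
  U ∈ Matrix.unitaryGroup (QIdx n) ℂ ∧
    ∀ a : Fin n → Fin 4, ∃ (b : Fin n → Fin 4) (ε : ℝ),
      (ε = 1 ∨ ε = -1) ∧ U * pauliString a * Uᴴ = (ε : ℂ) • pauliString b

/-- The computational all-zeros basis vector `|0⟩^{⊗n}`. -/
def zeroVec (n : ℕ) : QIdx n → ℂ :=
  fun i => if (∀ k, i k = 0) then 1 else 0

/-- A pure stabilizer state vector: `U|0⟩^{⊗n}` for a Clifford unitary `U`. -/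
def IsPureStab {n : ℕ} (ψ : QIdx n → ℂ) : Prop :=
  ∃ U, IsCliffordUnitary U ∧ ψ = U.mulVec (zeroVec n)

/-- The rank-one projector `|ψ⟩⟨ψ|`. -/
def proj {n : ℕ} (ψ : QIdx n → ℂ) : Matrix (QIdx n) (QIdx n) ℂ :=
  Matrix.vecMulVec ψ (star ψ)

/-- A mixed stabilizer state: a finite convex combination of pure stabilizer projectors. -/
def IsMixedStab {n : ℕ} (ρ : Matrix (QIdx n) (QIdx n) ℂ) : Prop :=
  ∃ (k : ℕ) (p : Fin k → ℝ) (ψ : Fin k → QIdx n → ℂ),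
    (∀ i, 0 ≤ p i) ∧ (∑ i, p i = 1) ∧ (∀ i, IsPureStab (ψ i)) ∧
    ρ = ∑ i, (p i : ℂ) • proj (ψ i)

/-- The set of values `ln ∑ᵢ |xᵢ|` over finite real stabilizer decompositions of `ρ`. -/
def StabDecomps {n : ℕ} (ρ : Matrix (QIdx n) (QIdx n) ℂ) : Set ℝ :=
  { r | ∃ (k : ℕ) (x : Fin k → ℝ) (ψ : Fin k → QIdx n → ℂ),
      (∀ i, IsPureStab (ψ i)) ∧ ρ = ∑ i, (x i : ℂ) • proj (ψ i) ∧
      r = Real.log (∑ i, |x i|) }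

/-- The log-free robustness of magic. -/
def LR {n : ℕ} (ρ : Matrix (QIdx n) (QIdx n) ℂ) : ℝ := sInf (StabDecomps ρ)

open Classical in
/-- Positive-semidefinite square root (junk value `0` off the PSD cone). -/
def psdSqrt {n : ℕ} (A : Matrix (QIdx n) (QIdx n) ℂ) : Matrix (QIdx n) (QIdx n) ℂ :=
  if h : A.PosSemidef then
    h.1.eigenvectorUnitary.1 * diagonal ((↑) ∘ Real.sqrt ∘ h.1.eigenvalues) *
      (star h.1.eigenvectorUnitary : Matrix (QIdx n) (QIdx n) ℂ)
  else 0

/-- The Uhlmann fidelity `F(ρ,σ) = (tr √(√ρ σ √ρ))²`. -/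
def fidelity {n : ℕ} (ρ σ : Matrix (QIdx n) (QIdx n) ℂ) : ℝ :=
  ((psdSqrt (psdSqrt ρ * σ * psdSqrt ρ)).trace.re) ^ 2

/-- The stabilizer fidelity `D_F(ρ) = inf { -ln F(ρ,σ) : σ a mixed stabilizer state }`. -/
def DF {n : ℕ} (ρ : Matrix (QIdx n) (QIdx n) ℂ) : ℝ :=
  sInf { r | ∃ σ, IsMixedStab σ ∧ r = - Real.log (fidelity ρ σ) }

/-- Filtered Pauli moment `Ã_α(ρ) = (2^n A_α(ρ) - 1)/(2^n - 1)`. -/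
def Atil {n : ℕ} (α : ℝ) (ρ : Matrix (QIdx n) (QIdx n) ℂ) : ℝ :=
  ((2:ℝ)^n * Amom α ρ - 1) / ((2:ℝ)^n - 1)

/-- Filtered stabilizer norm `D̃(ρ) = (2^n D(ρ) - 1)/(2^n - 1)`. -/
def Dtil {n : ℕ} (ρ : Matrix (QIdx n) (QIdx n) ℂ) : ℝ :=
  ((2:ℝ)^n * Dnorm ρ - 1) / ((2:ℝ)^n - 1)

/-- Filtered magic witness `W̃_α(ρ) = (1/(1-α)) ln Ã_α(ρ) + ((1-2α)/(1-α)) ln Ã₁(ρ)`. -/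
def Wtil {n : ℕ} (α : ℝ) (ρ : Matrix (QIdx n) (QIdx n) ℂ) : ℝ :=
  (1/(1-α)) * Real.log (Atil α ρ) + ((1 - 2*α)/(1-α)) * Real.log (Atil 1 ρ)

/-- The maximally mixed state `I/2^n`. -/
def maxMixed (n : ℕ) : Matrix (QIdx n) (QIdx n) ℂ := ((2:ℂ)^n)⁻¹ • 1

/-- The single-qubit T-state vector `|T⟩ = (|0⟩ + e^{-iπ/4}|1⟩)/√2`. -/
def Tket : QIdx 1 → ℂ :=
  fun i => if i 0 = 0 then (Real.sqrt 2 : ℂ)⁻¹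
           else Complex.exp (-(Real.pi/4 : ℂ) * Complex.I) * (Real.sqrt 2 : ℂ)⁻¹

/-- The depolarized T-state `ρ_p = (1-p)|T⟩⟨T| + p·I₂/2`. -/
def rhoDep (p : ℝ) : Matrix (QIdx 1) (QIdx 1) ℂ :=
  ((1 - p : ℝ) : ℂ) • proj Tket + ((p : ℝ) : ℂ) • (((2:ℂ))⁻¹ • 1)



set_option maxHeartbeats 1000000

section AuxMagic

open Finset

lemma pauliMat_conj' (x : Fin 4) (s t : Fin 2) :
    (starRingEnd ℂ) (pauliMat x s t) = pauliMat x t s := by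
  fin_cases x <;> fin_cases s <;> fin_cases t <;>
    simp [pauliMat, Matrix.one_apply]

lemma pauli_single_complete (i j k l : Fin 2) :
    ∑ x : Fin 4, pauliMat x i j * pauliMat x k l
      = if i = l ∧ j = k then 2 else 0 := by
  rw [Fin.sum_univ_four]
  fin_cases i <;> fin_cases j <;> fin_cases k <;> fin_cases l <;>
    simp [pauliMat, Matrix.one_apply] <;> ring_nf

lemma pauliString_conj {n : ℕ} (a : Fin n → Fin 4) (i j : QIdx n) :
    (starRingEnd ℂ) (pauliString a i j) = pauliString a j i := by
  rw [pauliString, pauliString, map_prod]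
  exact Finset.prod_congr rfl fun m _ => pauliMat_conj' _ _ _

lemma prod_ite_all {n : ℕ} (P : Fin n → Prop) [DecidablePred P] (c : ℂ) :
    (∏ m, (if P m then c else 0)) = if (∀ m, P m) then c ^ n else 0 := by
  by_cases h : ∀ m, P m
  · rw [if_pos h]
    calc (∏ m, (if P m then c else 0)) = ∏ _m : Fin n, c :=
          Finset.prod_congr rfl fun m _ => if_pos (h m)
      _ = c ^ n := by rw [Finset.prod_const, Finset.card_univ, Fintype.card_fin]
  · push_neg at h
    obtain ⟨m, hm⟩ := h
    rw [if_neg (by push_neg; exact ⟨m, hm⟩)]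
    exact Finset.prod_eq_zero (Finset.mem_univ m) (if_neg hm)

lemma pauliString_complete {n : ℕ} (i j k l : QIdx n) :
    ∑ a : Fin n → Fin 4, pauliString a i j * pauliString a k l
      = if i = l ∧ j = k then (2:ℂ)^n else 0 := by
  have h1 : ∀ a : Fin n → Fin 4, pauliString a i j * pauliString a k l
      = ∏ m, (pauliMat (a m) (i m) (j m) * pauliMat (a m) (k m) (l m)) := by
    intro a; rw [pauliString, pauliString, ← Finset.prod_mul_distrib]
  calc ∑ a : Fin n → Fin 4, pauliString a i j * pauliString a k l
      = ∑ a ∈ Fintype.piFinset (fun _ : Fin n => (univ : Finset (Fin 4))),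
          ∏ m, (pauliMat (a m) (i m) (j m) * pauliMat (a m) (k m) (l m)) := by
        rw [Fintype.piFinset_univ]; exact Finset.sum_congr rfl fun a _ => h1 a
    _ = ∏ m, ∑ x : Fin 4, pauliMat x (i m) (j m) * pauliMat x (k m) (l m) :=
        (Finset.prod_univ_sum (fun _ : Fin n => (univ : Finset (Fin 4)))
          (fun m x => pauliMat x (i m) (j m) * pauliMat x (k m) (l m))).symm
    _ = ∏ m, (if i m = l m ∧ j m = k m then (2:ℂ) else 0) :=
        Finset.prod_congr rfl fun m _ => pauli_single_complete _ _ _ _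
    _ = if (∀ m, i m = l m ∧ j m = k m) then (2:ℂ)^n else 0 := prod_ite_all _ _
    _ = if i = l ∧ j = k then (2:ℂ)^n else 0 := by
        congr 1
        simp only [eq_iff_iff, funext_iff, forall_and]

lemma pauliString_zero {n : ℕ} : pauliString (fun _ : Fin n => (0:Fin 4)) = 1 := by
  ext i j
  rw [pauliString, Matrix.one_apply]
  calc (∏ k, pauliMat 0 (i k) (j k)) = ∏ k, (if i k = j k then (1:ℂ) else 0) := by
        refine Finset.prod_congr rfl fun m _ => ?_
        simp [pauliMat, Matrix.one_apply]
    _ = if (∀ k, i k = j k) then (1:ℂ)^n else 0 := prod_ite_all _ _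
    _ = if i = j then (1:ℂ) else 0 := by
        rw [one_pow]; congr 1; simp [funext_iff]

lemma trace_mul_pauli {n : ℕ} (ρ : Matrix (QIdx n) (QIdx n) ℂ) (P : Matrix (QIdx n) (QIdx n) ℂ) :
    (ρ * P).trace = ∑ p : QIdx n × QIdx n, ρ p.1 p.2 * P p.2 p.1 := by
  rw [Matrix.trace, ← Finset.univ_product_univ, Finset.sum_product]
  exact Finset.sum_congr rfl fun i _ => by rw [Matrix.diag_apply, Matrix.mul_apply]

lemma parseval {n : ℕ} (ρ : Matrix (QIdx n) (QIdx n) ℂ) (hH : ρ.IsHermitian) :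
    ∑ a : Fin n → Fin 4, (‖(ρ * pauliString a).trace‖)^2
      = 2^n * (ρ*ρ).trace.re := by
  have key : ∑ a : Fin n → Fin 4,
      ((ρ * pauliString a).trace * (starRingEnd ℂ) ((ρ * pauliString a).trace))
      = (2:ℂ)^n * (ρ*ρ).trace := by
    have hconj : ∀ a : Fin n → Fin 4, (starRingEnd ℂ) ((ρ * pauliString a).trace)
        = ∑ q : QIdx n × QIdx n, (starRingEnd ℂ) (ρ q.1 q.2) * pauliString a q.1 q.2 := by
      intro a
      rw [trace_mul_pauli, map_sum]
      exact Finset.sum_congr rfl fun q _ => by rw [_root_.map_mul, pauliString_conj]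
    calc ∑ a : Fin n → Fin 4,
        ((ρ * pauliString a).trace * (starRingEnd ℂ) ((ρ * pauliString a).trace))
        = ∑ a : Fin n → Fin 4, ∑ p : QIdx n × QIdx n, ∑ q : QIdx n × QIdx n,
            (ρ p.1 p.2 * (starRingEnd ℂ) (ρ q.1 q.2)) *
              (pauliString a p.2 p.1 * pauliString a q.1 q.2) := by
          refine Finset.sum_congr rfl fun a _ => ?_
          rw [hconj, trace_mul_pauli, Finset.sum_mul_sum]
          exact Finset.sum_congr rfl fun p _ => Finset.sum_congr rfl fun q _ => by ring
      _ = ∑ p : QIdx n × QIdx n, ∑ q : QIdx n × QIdx n,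
            (ρ p.1 p.2 * (starRingEnd ℂ) (ρ q.1 q.2)) *
              ∑ a : Fin n → Fin 4, (pauliString a p.2 p.1 * pauliString a q.1 q.2) := by
          rw [Finset.sum_comm]
          refine Finset.sum_congr rfl fun p _ => ?_
          rw [Finset.sum_comm]
          exact Finset.sum_congr rfl fun q _ => by rw [Finset.mul_sum]
      _ = ∑ p : QIdx n × QIdx n, (ρ p.1 p.2 * (starRingEnd ℂ) (ρ p.1 p.2)) * (2:ℂ)^n := by
          refine Finset.sum_congr rfl fun p _ => ?_
          rw [show (∑ q : QIdx n × QIdx n, (ρ p.1 p.2 * (starRingEnd ℂ) (ρ q.1 q.2)) *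
              ∑ a : Fin n → Fin 4, (pauliString a p.2 p.1 * pauliString a q.1 q.2))
            = ∑ q : QIdx n × QIdx n, (if q = p then
                (ρ p.1 p.2 * (starRingEnd ℂ) (ρ q.1 q.2)) * (2:ℂ)^n else 0) from
            Finset.sum_congr rfl fun q _ => by
              rw [pauliString_complete]
              by_cases hq : q = p
              · subst hq; rw [if_pos ⟨rfl, rfl⟩, if_pos rfl]
              · rw [if_neg (fun h => hq (Prod.ext h.2.symm h.1.symm)), if_neg hq, mul_zero]]
          rw [Finset.sum_ite_eq' Finset.univ p, if_pos (Finset.mem_univ p)]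
      _ = (2:ℂ)^n * (ρ*ρ).trace := by
          rw [trace_mul_pauli ρ ρ, Finset.mul_sum]
          refine Finset.sum_congr rfl fun p _ => ?_
          have : (starRingEnd ℂ) (ρ p.1 p.2) = ρ p.2 p.1 := by
            rw [show ((starRingEnd ℂ) (ρ p.1 p.2)) = star (ρ p.1 p.2) from rfl,
              ← Matrix.conjTranspose_apply, hH]
          rw [this]; ring
  have h2 : ((2:ℂ)^n * (ρ*ρ).trace).re = 2^n * (ρ*ρ).trace.re := by
    rw [show ((2:ℂ)^n) = ((2^n : ℝ) : ℂ) from by push_cast; ring, Complex.re_ofReal_mul]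
  calc ∑ a : Fin n → Fin 4, (‖(ρ * pauliString a).trace‖)^2
      = ∑ a : Fin n → Fin 4,
          ((ρ * pauliString a).trace * (starRingEnd ℂ) ((ρ * pauliString a).trace)).re := by
        refine Finset.sum_congr rfl fun a _ => ?_
        rw [Complex.mul_conj, Complex.ofReal_re, Complex.sq_norm]
    _ = (∑ a : Fin n → Fin 4,
          ((ρ * pauliString a).trace * (starRingEnd ℂ) ((ρ * pauliString a).trace))).re :=
        (Complex.re_sum _ _).symm
    _ = ((2:ℂ)^n * (ρ*ρ).trace).re := by rw [key]
    _ = 2^n * (ρ*ρ).trace.re := h2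

lemma holder_theta {ι : Type*} [Fintype ι] (a b : ι → ℝ) (ha : ∀ i, 0 ≤ a i)
    (hb : ∀ i, 0 ≤ b i) {θ : ℝ} (h0 : 0 ≤ θ) (h1 : θ ≤ 1) :
    ∑ i, (a i) ^ θ * (b i) ^ (1 - θ) ≤ (∑ i, a i) ^ θ * (∑ i, b i) ^ (1 - θ) := by
  rcases eq_or_lt_of_le h0 with h0' | h0'
  · simp [← h0']
  rcases eq_or_lt_of_le h1 with h1' | h1'
  · simp [h1']
  have hθ1 : 0 < 1 - θ := by linarith
  have hpq : Real.HolderConjugate (1/θ) (1/(1-θ)) := by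
    rw [Real.holderConjugate_iff]; constructor
    · rw [lt_div_iff₀ h0']; linarith
    · rw [one_div, one_div, inv_inv, inv_inv]; ring
  have key := Real.inner_le_Lp_mul_Lq_of_nonneg (s := Finset.univ) hpq
    (f := fun i => (a i) ^ θ) (g := fun i => (b i) ^ (1-θ))
    (fun i _ => Real.rpow_nonneg (ha i) θ) (fun i _ => Real.rpow_nonneg (hb i) (1-θ))
  calc ∑ i, (a i) ^ θ * (b i) ^ (1 - θ) ≤ _ := key
    _ = (∑ i, a i) ^ θ * (∑ i, b i) ^ (1 - θ) := by
        rw [one_div_one_div, one_div_one_div]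
        congr 2
        · apply Finset.sum_congr rfl; intro i _
          rw [← Real.rpow_mul (ha i), one_div, mul_inv_cancel₀ h0'.ne', Real.rpow_one]
        · apply Finset.sum_congr rfl; intro i _
          rw [← Real.rpow_mul (hb i), one_div, mul_inv_cancel₀ hθ1.ne', Real.rpow_one]

lemma key_ineq {ι : Type*} [Fintype ι] (c : ι → ℝ) (hc : ∀ i, 0 ≤ c i)
    (i0 : ι) (hc0 : c i0 = 1) {α : ℝ} (hα : 1/2 ≤ α) (hα1 : α ≠ 1) {N : ℝ} (hNpos : 0 < N) :
    (1/(1-α)) * Real.log (N⁻¹ * ∑ i, c i ^ (2*α))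
      - ((1-2*α)/(1-α)) * (- Real.log (N⁻¹ * ∑ i, c i ^ (2:ℝ)))
      ≤ 2 * Real.log (N⁻¹ * ∑ i, c i ^ (1:ℝ)) := by
  set S : ℝ := ∑ i, c i ^ (2*α) with hSdef
  set T : ℝ := ∑ i, c i ^ (2:ℝ) with hTdef
  set Ds : ℝ := ∑ i, c i ^ (1:ℝ) with hDdef
  have one_le : ∀ e : ℝ, (1:ℝ) ≤ ∑ i, c i ^ e := by
    intro e
    have h1 : c i0 ^ e = 1 := by rw [hc0, Real.one_rpow]
    calc (1:ℝ) = c i0 ^ e := h1.symm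
      _ ≤ ∑ i, c i ^ e :=
        Finset.single_le_sum (fun i _ => Real.rpow_nonneg (hc i) e) (Finset.mem_univ i0)
  have hS1 : 1 ≤ S := one_le _
  have hT1 : 1 ≤ T := one_le _
  have hD1 : 1 ≤ Ds := one_le _
  have hSpos : 0 < S := by linarith
  have hTpos : 0 < T := by linarith
  have hDpos : 0 < Ds := by linarith
  have hlog : ∀ X : ℝ, 0 < X → Real.log (N⁻¹ * X) = Real.log X - Real.log N := by
    intro X hX
    rw [Real.log_mul (inv_ne_zero hNpos.ne') hX.ne', Real.log_inv]; ring
  rw [hlog S hSpos, hlog T hTpos, hlog Ds hDpos]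
  have hDs : Ds = ∑ i, c i := Finset.sum_congr rfl fun i _ => Real.rpow_one _
  rcases lt_or_gt_of_ne hα1 with hlt | hgt
  · -- α < 1
    have h1m : (0:ℝ) < 1 - α := by linarith
    have hold := holder_theta (fun i => c i ^ (2:ℝ)) c
      (fun i => Real.rpow_nonneg (hc i) _) hc
      (show (0:ℝ) ≤ 2*α - 1 by linarith) (show (2*α - 1 : ℝ) ≤ 1 by linarith)
    have hterm : ∀ i : ι, ((c i)^(2:ℝ))^(2*α-1) * (c i)^(1-(2*α-1)) = c i ^ (2*α) := by
      intro i
      rw [← Real.rpow_mul (hc i),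
        ← Real.rpow_add' (hc i) (by intro h; nlinarith : 2*(2*α-1) + (1-(2*α-1)) ≠ 0)]
      congr 1; ring
    have key0 : S ≤ T ^ (2*α-1) * Ds ^ (1-(2*α-1)) := by
      calc S = ∑ i, ((c i)^(2:ℝ))^(2*α-1) * (c i)^(1-(2*α-1)) :=
            Finset.sum_congr rfl fun i _ => (hterm i).symm
        _ ≤ (∑ i, c i ^ (2:ℝ)) ^ (2*α-1) * (∑ i, c i) ^ (1-(2*α-1)) := hold
        _ = T ^ (2*α-1) * Ds ^ (1-(2*α-1)) := by rw [← hDs]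
    have key : Real.log S ≤ (2*α-1) * Real.log T + (1-(2*α-1)) * Real.log Ds := by
      calc Real.log S ≤ Real.log (T ^ (2*α-1) * Ds ^ (1-(2*α-1))) := Real.log_le_log hSpos key0
        _ = (2*α-1) * Real.log T + (1-(2*α-1)) * Real.log Ds := by
            rw [Real.log_mul (Real.rpow_pos_of_pos hTpos _).ne' (Real.rpow_pos_of_pos hDpos _).ne',
              Real.log_rpow hTpos, Real.log_rpow hDpos]
    rw [show (1/(1-α)) * (Real.log S - Real.log N)
        - ((1-2*α)/(1-α)) * (-(Real.log T - Real.log N))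
        = ((Real.log S - Real.log N) + (1-2*α) * (Real.log T - Real.log N)) / (1-α) from by ring,
      div_le_iff₀ h1m]
    nlinarith [key]
  · -- α > 1
    have h1m : (1:ℝ) - α < 0 := by linarith
    have h2a1 : (0:ℝ) < 2*α - 1 := by linarith
    have hθ0 : (0:ℝ) ≤ 1/(2*α-1) := by positivity
    have hθ1 : (1:ℝ)/(2*α-1) ≤ 1 := by rw [div_le_one h2a1]; linarith
    have hold := holder_theta (fun i => c i ^ (2*α)) c
      (fun i => Real.rpow_nonneg (hc i) _) hc hθ0 hθ1
    have hexp : 2*α*(1/(2*α-1)) + (1-(1/(2*α-1))) = 2 := by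
      field_simp
      ring
    have hterm : ∀ i : ι, ((c i)^(2*α))^(1/(2*α-1)) * (c i)^(1-(1/(2*α-1))) = c i ^ (2:ℝ) := by
      intro i
      rw [← Real.rpow_mul (hc i),
        ← Real.rpow_add' (hc i) (by rw [hexp]; norm_num)]
      rw [hexp]
    have key0 : T ≤ S ^ (1/(2*α-1)) * Ds ^ (1-(1/(2*α-1))) := by
      calc T = ∑ i, ((c i)^(2*α))^(1/(2*α-1)) * (c i)^(1-(1/(2*α-1))) :=
            Finset.sum_congr rfl fun i _ => (hterm i).symm
        _ ≤ (∑ i, c i ^ (2*α)) ^ (1/(2*α-1)) * (∑ i, c i) ^ (1-(1/(2*α-1))) := hold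
        _ = S ^ (1/(2*α-1)) * Ds ^ (1-(1/(2*α-1))) := by rw [← hDs]
    have hlogT : Real.log T ≤ (1/(2*α-1)) * Real.log S + (1-(1/(2*α-1))) * Real.log Ds := by
      calc Real.log T ≤ Real.log (S ^ (1/(2*α-1)) * Ds ^ (1-(1/(2*α-1)))) :=
            Real.log_le_log hTpos key0
        _ = (1/(2*α-1)) * Real.log S + (1-(1/(2*α-1))) * Real.log Ds := by
            rw [Real.log_mul (Real.rpow_pos_of_pos hSpos _).ne' (Real.rpow_pos_of_pos hDpos _).ne',
              Real.log_rpow hSpos, Real.log_rpow hDpos]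
    have key : (2*α-1) * Real.log T ≤ Real.log S + (2*α-2) * Real.log Ds := by
      calc (2*α-1) * Real.log T
          ≤ (2*α-1) * ((1/(2*α-1)) * Real.log S + (1-(1/(2*α-1))) * Real.log Ds) :=
            mul_le_mul_of_nonneg_left hlogT h2a1.le
        _ = Real.log S + (2*α-2) * Real.log Ds := by
            have hcancel : (2*α-1) * (1/(2*α-1)) = 1 := by field_simp
            linear_combination (Real.log S - Real.log Ds) * hcancel
    rw [show (1/(1-α)) * (Real.log S - Real.log N)
        - ((1-2*α)/(1-α)) * (-(Real.log T - Real.log N))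
        = ((Real.log S - Real.log N) + (1-2*α) * (Real.log T - Real.log N)) / (1-α) from by ring,
      div_le_iff_of_neg h1m]
    nlinarith [key]

end AuxMagic

/-- for `α ≥ 1/2`, `α ≠ 1`, the witness is bounded by twice the
logarithm of the stabilizer norm: `W_α(ρ) ≤ 2 ln D(ρ)`. -/


theorem witness_le_two_log_stabNorm {n : ℕ} (ρ : Matrix (QIdx n) (QIdx n) ℂ)
    (hρ : IsState ρ) (α : ℝ) (hα : (1:ℝ)/2 ≤ α) (hα1 : α ≠ 1) :
    Wit α ρ ≤ 2 * Real.log (Dnorm ρ) := by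
  obtain ⟨hpsd, htr⟩ := hρ
  have hH : ρ.IsHermitian := hpsd.1
  have hNpos : (0:ℝ) < (2:ℝ)^n := by positivity
  have hc : ∀ a : Fin n → Fin 4, 0 ≤ ‖(ρ * pauliString a).trace‖ :=
    fun a => norm_nonneg _
  have hc0 : ‖((ρ * pauliString (fun _ : Fin n => (0:Fin 4))).trace)‖ = 1 := by
    rw [pauliString_zero, mul_one, htr, norm_one]
  have hre : (ρ*ρ).trace.re
      = ((2:ℝ)^n)⁻¹ * ∑ a : Fin n → Fin 4,
          (‖(ρ * pauliString a).trace‖) ^ (2:ℝ) := by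
    have hp := parseval ρ hH
    have hsq : ∑ a : Fin n → Fin 4, (‖(ρ * pauliString a).trace‖) ^ (2:ℝ)
        = ∑ a : Fin n → Fin 4, (‖(ρ * pauliString a).trace‖)^2 :=
      Finset.sum_congr rfl fun a _ => Real.rpow_two _
    rw [hsq, hp]
    field_simp
  have hmain := key_ineq (fun a : Fin n → Fin 4 => ‖(ρ * pauliString a).trace‖)
    hc (fun _ => 0) hc0 hα hα1 hNpos
  unfold Wit S2 Dnorm Amom
  rw [hre, show (2:ℝ) * (1/2) = 1 from by norm_num]
  exact hmain

end
end

section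
/- Mixed unital Clifford channels cannot increase the Pauli spectrum moments: let Λ(ρ) = Σ_{i=1}^k p_i U_i ρ U_i† where p_i ≥ 0, Σ_{i=1}^k p_i = 1, and each U_i is a Clifford unitary on n qubits. Then for every n-qubit state ρ and every integer α > 1, A_α(Λ(ρ)) ≤ A_α(ρ), equivalently −ln A_α(Λ(ρ)) ≥ −ln A_α(ρ). -/
open Matrix Complex BigOperators
open scoped ComplexOrder

noncomputable section

section AuxLemmas

lemma pauliMat_trace_mul (a b : Fin 4) :
    (pauliMat a * pauliMat b).trace = if a = b then 2 else 0 := by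
  fin_cases a <;> fin_cases b <;>
    simp [pauliMat, Matrix.trace, Matrix.mul_apply, Fin.sum_univ_two, Matrix.one_apply,
      Complex.I_mul_I] <;> ring_nf

lemma pauliString_trace_mul {n : ℕ} (a b : Fin n → Fin 4) :
    (pauliString a * pauliString b).trace
      = ∏ k, (pauliMat (a k) * pauliMat (b k)).trace := by
  have h1 : (pauliString a * pauliString b).trace
      = ∑ q : QIdx n × QIdx n, ∏ k,
          (pauliMat (a k) (q.1 k) (q.2 k) * pauliMat (b k) (q.2 k) (q.1 k)) := by
    rw [Fintype.sum_prod_type]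
    simp [Matrix.trace, Matrix.diag, Matrix.mul_apply, pauliString,
      ← Finset.prod_mul_distrib]
  have h2 : ∑ q : QIdx n × QIdx n, ∏ k,
          (pauliMat (a k) (q.1 k) (q.2 k) * pauliMat (b k) (q.2 k) (q.1 k))
      = ∑ g : Fin n → Fin 2 × Fin 2, ∏ k,
          (pauliMat (a k) (g k).1 (g k).2 * pauliMat (b k) (g k).2 (g k).1) := by
    exact (Fintype.sum_bijective (Equiv.arrowProdEquivProdArrow (Fin n) (fun _ => Fin 2) (fun _ => Fin 2))
      (Equiv.bijective _) _ _ (fun g => rfl)).symm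
  have h3 : ∏ k, (pauliMat (a k) * pauliMat (b k)).trace
      = ∏ k, ∑ q : Fin 2 × Fin 2, pauliMat (a k) q.1 q.2 * pauliMat (b k) q.2 q.1 := by
    congr 1; ext k
    rw [Fintype.sum_prod_type]
    simp [Matrix.trace, Matrix.diag, Matrix.mul_apply]
  rw [h1, h2, h3, Fintype.prod_sum]

lemma trace_pauliString_mul {n : ℕ} (a b : Fin n → Fin 4) :
    (pauliString a * pauliString b).trace = if a = b then (2:ℂ)^n else 0 := by
  rw [pauliString_trace_mul]
  by_cases h : a = b
  · subst h; simp [pauliMat_trace_mul]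
  · rw [if_neg h]
    obtain ⟨k, hk⟩ := Function.ne_iff.mp h
    exact Finset.prod_eq_zero (Finset.mem_univ k) (by simp [pauliMat_trace_mul, hk])

lemma pauliString_zeroFun {n : ℕ} :
    pauliString (fun _ => (0 : Fin 4)) = (1 : Matrix (QIdx n) (QIdx n) ℂ) := by
  ext i j
  show (∏ k, pauliMat 0 (i k) (j k)) = _
  by_cases h : i = j
  · subst h; simp [pauliMat, Matrix.one_apply]
  · rw [Matrix.one_apply_ne h]
    obtain ⟨k, hk⟩ := Function.ne_iff.mp h
    exact Finset.prod_eq_zero (Finset.mem_univ k) (by simp [pauliMat, Matrix.one_apply_ne hk])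

lemma Amom_conj {n : ℕ} (α : ℝ) (ρ U : Matrix (QIdx n) (QIdx n) ℂ)
    (hU : IsCliffordUnitary U) : Amom α (U * ρ * Uᴴ) = Amom α ρ := by
  obtain ⟨hUu, hcl⟩ := hU
  have hUU : Uᴴ * U = 1 := by
    simpa [Matrix.star_eq_conjTranspose] using (Matrix.mem_unitaryGroup_iff'.mp hUu)
  choose g ε hsgn hconj using hcl
  have hε2 : ∀ a, (ε a : ℂ) * (ε a : ℂ) = 1 := by
    intro a; rcases hsgn a with h | h <;> simp [h]
  have hginj : Function.Injective g := by
    intro a a' h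
    by_contra hne
    have h1 := hconj a
    have h2 := hconj a'
    rw [h] at h1
    have key : (ε a' : ℂ) • pauliString a = (ε a : ℂ) • pauliString a' := by
      have e1 : Uᴴ * ((ε a' : ℂ) • (U * pauliString a * Uᴴ)) * U
          = Uᴴ * ((ε a : ℂ) • (U * pauliString a' * Uᴴ)) * U := by
        rw [h1, h2, smul_comm (ε a' : ℂ) (ε a : ℂ)]
      have simp1 : ∀ (c : ℂ) (M : Matrix (QIdx n) (QIdx n) ℂ),
          Uᴴ * (c • (U * M * Uᴴ)) * U = c • M := by
        intro c M
        rw [Matrix.mul_smul, Matrix.smul_mul]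
        congr 1
        calc Uᴴ * (U * M * Uᴴ) * U = (Uᴴ * U) * M * (Uᴴ * U) := by
              simp only [Matrix.mul_assoc]
          _ = M := by rw [hUU, Matrix.one_mul, Matrix.mul_one]
      rw [simp1, simp1] at e1
      exact e1
    have tr1 : ((((ε a' : ℂ) • pauliString a) * pauliString a).trace : ℂ)
        = (ε a' : ℂ) * (2:ℂ)^n := by
      rw [Matrix.smul_mul, Matrix.trace_smul, trace_pauliString_mul]
      simp
    have tr2 : ((((ε a : ℂ) • pauliString a') * pauliString a).trace : ℂ) = 0 := by
      rw [Matrix.smul_mul, Matrix.trace_smul, trace_pauliString_mul,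
        if_neg (fun hh => hne hh.symm)]
      simp
    rw [key, tr2] at tr1
    have hnz : (ε a' : ℂ) ≠ 0 := by
      rcases hsgn a' with h | h <;> simp [h]
    have h2n : ((2:ℂ)^n : ℂ) ≠ 0 := by positivity
    rw [eq_comm] at tr1
    exact hnz (by
      rcases mul_eq_zero.mp tr1 with h | h
      · exact h
      · exact absurd h h2n)
  have hgbij : Function.Bijective g := Finite.injective_iff_bijective.mp hginj
  have hterm : ∀ c, ‖((U * ρ * Uᴴ) * pauliString (g c)).trace‖
      = ‖(ρ * pauliString c).trace‖ := by
    intro c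
    have hP : pauliString (g c) = (ε c : ℂ) • (U * pauliString c * Uᴴ) := by
      rw [hconj c, smul_smul, hε2 c, one_smul]
    rw [hP, Matrix.mul_smul, Matrix.trace_smul]
    have htr : ((U * ρ * Uᴴ) * (U * pauliString c * Uᴴ)).trace
        = (ρ * pauliString c).trace := by
      calc ((U * ρ * Uᴴ) * (U * pauliString c * Uᴴ)).trace
          = (U * (ρ * pauliString c) * Uᴴ).trace := by
            congr 1
            calc (U * ρ * Uᴴ) * (U * pauliString c * Uᴴ)
                = U * ρ * (Uᴴ * U) * pauliString c * Uᴴ := by simp only [Matrix.mul_assoc]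
              _ = U * (ρ * pauliString c) * Uᴴ := by
                  rw [hUU, Matrix.mul_one]; simp only [Matrix.mul_assoc]
        _ = (ρ * pauliString c).trace := by
            rw [Matrix.trace_mul_cycle, hUU, Matrix.one_mul]
    rw [htr]
    rcases hsgn c with h | h <;> simp [h]
  unfold Amom
  congr 1
  exact (Fintype.sum_bijective g hgbij _ _ (fun c => by rw [hterm c])).symm

lemma conj_trace_aux {n : ℕ} (U ρ : Matrix (QIdx n) (QIdx n) ℂ)
    (hUu : U ∈ Matrix.unitaryGroup (QIdx n) ℂ) : (U * ρ * Uᴴ).trace = ρ.trace := by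
  have hUU : Uᴴ * U = 1 := by
    simpa [Matrix.star_eq_conjTranspose] using (Matrix.mem_unitaryGroup_iff'.mp hUu)
  rw [Matrix.trace_mul_cycle, hUU, Matrix.one_mul]

end AuxLemmas

set_option maxHeartbeats 2000000 in

/-- mixed unital Clifford channels cannot increase the Pauli
spectrum moments: `A_α(Λ(ρ)) ≤ A_α(ρ)` for every integer `α > 1`. -/
theorem Amom_nonincreasing_mixed_unital_clifford {n k : ℕ}
    (p : Fin k → ℝ) (U : Fin k → Matrix (QIdx n) (QIdx n) ℂ)
    (hp : ∀ i, 0 ≤ p i) (hpsum : ∑ i, p i = 1)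
    (hU : ∀ i, IsCliffordUnitary (U i))
    (ρ : Matrix (QIdx n) (QIdx n) ℂ) (hρ : IsState ρ)
    (α : ℕ) (hα : 1 < α) :
    Amom (α : ℝ) (∑ i, (p i : ℂ) • (U i * ρ * (U i)ᴴ)) ≤ Amom (α : ℝ) ρ ∧
    - Real.log (Amom (α : ℝ) (∑ i, (p i : ℂ) • (U i * ρ * (U i)ᴴ))) ≥
      - Real.log (Amom (α : ℝ) ρ) := by
  set Λ : Matrix (QIdx n) (QIdx n) ℂ := ∑ i, (p i : ℂ) • (U i * ρ * (U i)ᴴ) with hΛ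
  clear_value Λ
  have hα1 : (1:ℝ) ≤ 2 * (α:ℝ) := by
    have : (1:ℝ) ≤ (α:ℝ) := by exact_mod_cast hα.le
    linarith
  have htrΛ : ∀ a, (Λ * pauliString a).trace
      = ∑ i, (p i : ℂ) * ((U i * ρ * (U i)ᴴ * pauliString a).trace) := by
    intro a
    rw [hΛ, Finset.sum_mul, Matrix.trace_sum]
    simp [Matrix.smul_mul, Matrix.trace_smul, smul_eq_mul]
  have hterm : ∀ a, (‖(Λ * pauliString a).trace‖) ^ (2 * (α:ℝ))
      ≤ ∑ i, p i * (‖(U i * ρ * (U i)ᴴ * pauliString a).trace‖) ^ (2 * (α:ℝ)) := by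
    intro a
    set t : Fin k → ℝ := fun i => ‖(U i * ρ * (U i)ᴴ * pauliString a).trace‖ with ht
    have h1 : ‖(Λ * pauliString a).trace‖ ≤ ∑ i, p i * t i := by
      rw [htrΛ a]
      refine le_trans (norm_sum_le _ _) (le_of_eq ?_)
      refine Finset.sum_congr rfl fun i _ => ?_
      rw [norm_mul, Complex.norm_real, Real.norm_eq_abs, _root_.abs_of_nonneg (hp i)]
    calc (‖(Λ * pauliString a).trace‖) ^ (2 * (α:ℝ))
        ≤ (∑ i, p i * t i) ^ (2 * (α:ℝ)) :=
          Real.rpow_le_rpow (norm_nonneg _) h1 (by linarith)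
      _ ≤ ∑ i, p i * (t i) ^ (2 * (α:ℝ)) :=
          Real.rpow_arith_mean_le_arith_mean_rpow Finset.univ p t
            (fun i _ => hp i) hpsum (fun i _ => norm_nonneg _) hα1
  have hmain : Amom (α:ℝ) Λ ≤ Amom (α:ℝ) ρ := by
    have hsum_le : ∑ a : Fin n → Fin 4, (‖(Λ * pauliString a).trace‖) ^ (2 * (α:ℝ))
        ≤ ∑ a : Fin n → Fin 4, ∑ i, p i *
            (‖(U i * ρ * (U i)ᴴ * pauliString a).trace‖) ^ (2 * (α:ℝ)) :=
      Finset.sum_le_sum fun a _ => hterm a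
    have h2 : Amom (α:ℝ) Λ ≤ ((2:ℝ)^n)⁻¹ * ∑ a : Fin n → Fin 4, ∑ i, p i *
            (‖(U i * ρ * (U i)ᴴ * pauliString a).trace‖) ^ (2 * (α:ℝ)) := by
      unfold Amom
      exact mul_le_mul_of_nonneg_left hsum_le (by positivity)
    have heq : ((2:ℝ)^n)⁻¹ * (∑ a : Fin n → Fin 4, ∑ i, p i *
            (‖(U i * ρ * (U i)ᴴ * pauliString a).trace‖) ^ (2 * (α:ℝ)))
        = ∑ i, p i * Amom (α:ℝ) (U i * ρ * (U i)ᴴ) := by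
      rw [Finset.sum_comm, Finset.mul_sum]
      refine Finset.sum_congr rfl fun i _ => ?_
      unfold Amom
      rw [← Finset.mul_sum]; ring
    calc Amom (α:ℝ) Λ ≤ _ := h2
      _ = ∑ i, p i * Amom (α:ℝ) (U i * ρ * (U i)ᴴ) := heq
      _ = ∑ i, p i * Amom (α:ℝ) ρ := by
          refine Finset.sum_congr rfl fun i _ => ?_
          rw [Amom_conj _ _ _ (hU i)]
      _ = Amom (α:ℝ) ρ := by rw [← Finset.sum_mul, hpsum, one_mul]
  have hΛtr : Λ.trace = 1 := by
    rw [hΛ, Matrix.trace_sum]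
    have htr : ∀ i, ((p i : ℂ) • (U i * ρ * (U i)ᴴ)).trace = (p i : ℂ) := by
      intro i
      rw [Matrix.trace_smul, conj_trace_aux _ _ (hU i).1, hρ.2, smul_eq_mul, mul_one]
    rw [Finset.sum_congr rfl fun i _ => htr i]
    exact_mod_cast congrArg (fun x : ℝ => (x : ℂ)) hpsum
  have hpos : 0 < Amom (α:ℝ) Λ := by
    unfold Amom
    have hzero : (‖(Λ * pauliString (fun _ => (0:Fin 4))).trace‖) ^ (2 * (α:ℝ))
        = 1 := by
      rw [pauliString_zeroFun, Matrix.mul_one, hΛtr]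
      simp [Real.one_rpow]
    have hsum : (1:ℝ) ≤ ∑ a : Fin n → Fin 4,
        (‖(Λ * pauliString a).trace‖) ^ (2 * (α:ℝ)) := by
      have h := Finset.single_le_sum
        (f := fun a : Fin n → Fin 4 => (‖(Λ * pauliString a).trace‖) ^ (2 * (α:ℝ)))
        (fun a _ => Real.rpow_nonneg (norm_nonneg _) _)
        (Finset.mem_univ (fun _ => (0:Fin 4)))
      rw [hzero] at h
      simpa using h
    have h2n : (0:ℝ) < ((2:ℝ)^n)⁻¹ := by positivity
    calc (0:ℝ) < ((2:ℝ)^n)⁻¹ * 1 := by linarith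
      _ ≤ _ := by exact mul_le_mul_of_nonneg_left hsum (le_of_lt h2n)
  refine ⟨hmain, ?_⟩
  exact neg_le_neg (Real.log_le_log hpos hmain)


end
end
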